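/- Correctness of parallel (odd-even transposition) bubble sort in n rounds: let α be a linearly ordered type and let a₀ be a list (or tuple) of n elements of α. Define one 'even phase' as simultaneously replacing each pair of entries at positions (2k, 2k+1) (0-based, with 2k+1 < n) by that pair sorted nondecreasingly, and one 'odd phase' as doing the same for each pair of positions (2k+1, 2k+2) with 2k+2 < n. Then after applying n phases, alternating even and odd (starting with either), the resulting list is a permutation of a₀ that is sorted in nondecreasing order. -/

import Mathlib

variable {α : Type*} [LinearOrder α]

/-- One even phase of odd-even transposition sort: simultaneously replace each
pair of entries at positions `(2k, 2k+1)` by that pair sorted nondecreasingly. -/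
def evenPhase : List α → List α
  | a :: b :: rest => min a b :: max a b :: evenPhase rest
  | l => l

/-- One odd phase of odd-even transposition sort: simultaneously replace each
pair of entries at positions `(2k+1, 2k+2)` by that pair sorted nondecreasingly. -/
def oddPhase : List α → List α
  | a :: rest => a :: evenPhase rest
  | l => l

/-- Apply `k` phases, alternating even and odd, starting with an even phase if
`b = true` and with an odd phase if `b = false`. -/
def applyPhases : ℕ → Bool → List α → List α
  | 0, _, l => l
  | k + 1, b, l => applyPhases k (!b) ((if b then evenPhase else oddPhase) l)

/-! ### Basic lemmas: permutation and monotone maps -/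

theorem evenPhase_perm : ∀ s : List α, (evenPhase s).Perm s
  | [] => .refl _
  | [a] => .refl _
  | a :: b :: r => by
    show (min a b :: max a b :: evenPhase r).Perm _
    rcases le_total a b with h | h
    · rw [min_eq_left h, max_eq_right h]
      exact ((evenPhase_perm r).cons _).cons _
    · rw [min_eq_right h, max_eq_left h]
      exact (List.Perm.swap _ _ _).trans (((evenPhase_perm r).cons _).cons _)

theorem oddPhase_perm : ∀ s : List α, (oddPhase s).Perm s
  | [] => .refl _
  | a :: r => (evenPhase_perm r).cons a

theorem applyPhases_perm : ∀ (k : ℕ) (b : Bool) (l : List α), (applyPhases k b l).Perm l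
  | 0, _, _ => .refl _
  | k + 1, b, l => by
    show (applyPhases k (!b) _).Perm _
    refine (applyPhases_perm k (!b) _).trans ?_
    cases b
    · exact oddPhase_perm l
    · exact evenPhase_perm l

section Mono
variable {β : Type*} [LinearOrder β] {f : α → β}

theorem map_evenPhase (hf : Monotone f) : ∀ s : List α,
    evenPhase (s.map f) = (evenPhase s).map f
  | [] => rfl
  | [a] => rfl
  | a :: b :: r => by
    show min (f a) (f b) :: max (f a) (f b) :: evenPhase (r.map f) = _
    rw [map_evenPhase hf r, ← hf.map_min, ← hf.map_max]
    rfl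

theorem map_oddPhase (hf : Monotone f) : ∀ s : List α,
    oddPhase (s.map f) = (oddPhase s).map f
  | [] => rfl
  | a :: r => by
    show f a :: evenPhase (r.map f) = _
    rw [map_evenPhase hf r]; rfl

theorem map_applyPhases (hf : Monotone f) : ∀ (k : ℕ) (b : Bool) (l : List α),
    applyPhases k b (l.map f) = (applyPhases k b l).map f
  | 0, _, _ => rfl
  | k + 1, b, l => by
    show applyPhases k (!b) _ = _
    cases b
    · rw [show (if false then evenPhase else oddPhase) (l.map f) = oddPhase (l.map f) from rfl,
        map_oddPhase hf l]
      exact map_applyPhases hf k _ _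
    · rw [show (if true then evenPhase else oddPhase) (l.map f) = evenPhase (l.map f) from rfl,
        map_evenPhase hf l]
      exact map_applyPhases hf k _ _

end Mono

/-! ### Positions of `false` entries in a Bool list, and the particle dynamics -/

/-- positions of `false` entries in a Bool list -/
def zeros : List Bool → List ℕ
  | [] => []
  | false :: s => 0 :: (zeros s).map (· + 1)
  | true :: s => (zeros s).map (· + 1)

/-- `goodPar p q`: the comparator `(q-1, q)` is present in a phase of parity `p`
(`p = true` for an even phase). -/
def goodPar (p : Bool) (q : ℕ) : Prop := cond p (q % 2 = 1) (q % 2 = 0 ∧ 0 < q)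

instance (p : Bool) (q : ℕ) : Decidable (goodPar p q) := by
  cases p <;> unfold goodPar <;> simp <;> infer_instance

/-- One phase of the particle dynamics on positions of zeros: each zero moves
one step to the left if its comparator is present and it is not blocked. -/
def stepped (p : Bool) (Q : List ℕ) : List ℕ :=
  Q.map fun q => if goodPar p q ∧ q - 1 ∉ Q then q - 1 else q

def applyMoves : ℕ → Bool → List ℕ → List ℕ
  | 0, _, Q => Q
  | k + 1, b, Q => applyMoves k (!b) (stepped b Q)

/-- the parity of the `(t+1)`-st phase when starting with parity `b` -/
def bt (t : ℕ) (b : Bool) : Bool := if t % 2 = 0 then b else !b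

def badBit (p : Bool) (q : ℕ) : ℕ := if goodPar p q then 0 else 1

theorem zeros_lt : ∀ s : List Bool, ∀ q ∈ zeros s, q < s.length := by
  intro s
  induction s with
  | nil => simp [zeros]
  | cons a r ih =>
    cases a <;> intro q hq <;>
      simp only [zeros, List.mem_cons, List.mem_map] at hq
    · rcases hq with rfl | ⟨x, hx, rfl⟩
      · simp
      · have := ih x hx; simp; omega
    · obtain ⟨x, hx, rfl⟩ := hq
      have := ih x hx; simp; omega

theorem zeros_pairwise : ∀ s : List Bool, (zeros s).Pairwise (· < ·) := by
  intro s
  induction s with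
  | nil => simp [zeros]
  | cons a r ih =>
    cases a <;> simp only [zeros]
    · rw [List.pairwise_cons]
      constructor
      · intro q hq
        simp only [List.mem_map] at hq
        obtain ⟨x, _, rfl⟩ := hq; omega
      · rw [List.pairwise_map]
        exact ih.imp (by omega)
    · rw [List.pairwise_map]
      exact ih.imp (by omega)

theorem stepped_length (p : Bool) (Q : List ℕ) : (stepped p Q).length = Q.length :=
  List.length_map _

theorem applyMoves_length : ∀ (k : ℕ) (b : Bool) (Q : List ℕ),
    (applyMoves k b Q).length = Q.length
  | 0, _, _ => rfl
  | k + 1, b, Q => by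
    show (applyMoves k (!b) (stepped b Q)).length = _
    rw [applyMoves_length k, stepped_length]

/-! ### A phase on a Bool list corresponds to a step of the particle dynamics -/

theorem tail2 (zr Q' : List ℕ) (hmem : ∀ q, q % 2 = 1 → (q + 1 ∈ Q' ↔ q - 1 ∈ zr)) :
    List.map ((fun q => if goodPar true q ∧ q - 1 ∉ Q' then q - 1 else q) ∘
        (fun x => x + 1) ∘ fun x => x + 1) zr
    = List.map ((fun x => x + 1) ∘ (fun x => x + 1) ∘
        fun q => if goodPar true q ∧ q - 1 ∉ zr then q - 1 else q) zr := by
  apply List.map_congr_left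
  intro q _
  simp only [Function.comp_apply, goodPar, Bool.cond_true, Nat.add_sub_cancel]
  by_cases hodd : q % 2 = 1
  · simp only [hmem q hodd]
    by_cases h2 : q - 1 ∈ zr
    · simp [h2]
    · have hp : (q + 1 + 1) % 2 = 1 := by omega
      simp [h2, hodd, hp]
      omega
  · have hp : ¬((q + 1 + 1) % 2 = 1) := by omega
    simp [hodd, hp]

theorem tail1 (zr Q' : List ℕ) (hmem : ∀ q, q % 2 = 1 → (q ∈ Q' ↔ q - 1 ∈ zr)) :
    List.map ((fun q => if goodPar false q ∧ q - 1 ∉ Q' then q - 1 else q) ∘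
        fun x => x + 1) zr
    = List.map ((fun x => x + 1) ∘
        fun q => if goodPar true q ∧ q - 1 ∉ zr then q - 1 else q) zr := by
  apply List.map_congr_left
  intro q _
  simp only [Function.comp_apply, goodPar, Bool.cond_true, Bool.cond_false, Nat.add_sub_cancel]
  by_cases hodd : q % 2 = 1
  · simp only [hmem q hodd]
    by_cases h2 : q - 1 ∈ zr
    · simp [h2]
    · have hp : (q + 1) % 2 = 0 := by omega
      simp [h2, hodd, hp]
      omega
  · have hp : ¬((q + 1) % 2 = 0) := by omega
    simp [hodd, hp]

theorem zeros_evenPhase : ∀ s : List Bool, zeros (evenPhase s) = stepped true (zeros s)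
  | [] => rfl
  | [a] => by cases a <;> simp [zeros, stepped, evenPhase, goodPar]
  | false :: false :: r => by
    have ih := zeros_evenPhase r
    show zeros (false :: false :: evenPhase r) = stepped true (zeros (false :: false :: r))
    simp only [zeros, ih, stepped, List.map_cons, List.map_map]
    rw [tail2 (zeros r) _ (by
      intro q hq
      simp only [List.mem_cons, List.mem_map, Function.comp_apply]
      constructor
      · rintro (h | h | ⟨x, hx, hx2⟩)
        · omega
        · omega
        · have : x = q - 1 := by omega
          subst this; exact hx
      · intro h; right; right; exact ⟨q - 1, h, by omega⟩)]
    rw [if_neg (by simp [goodPar]), if_neg (by simp [goodPar])]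
  | false :: true :: r => by
    have ih := zeros_evenPhase r
    show zeros (false :: true :: evenPhase r) = stepped true (zeros (false :: true :: r))
    simp only [zeros, ih, stepped, List.map_cons, List.map_map]
    rw [tail2 (zeros r) _ (by
      intro q hq
      simp only [List.mem_cons, List.mem_map, Function.comp_apply]
      constructor
      · rintro (h | ⟨x, hx, hx2⟩)
        · omega
        · have : x = q - 1 := by omega
          subst this; exact hx
      · intro h; right; exact ⟨q - 1, h, by omega⟩)]
    rw [if_neg (by simp [goodPar])]
  | true :: false :: r => by
    have ih := zeros_evenPhase r
    show zeros (false :: true :: evenPhase r) = stepped true (zeros (true :: false :: r))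
    simp only [zeros, ih, stepped, List.map_cons, List.map_map]
    rw [tail2 (zeros r) _ (by
      intro q hq
      simp only [List.mem_cons, List.mem_map, Function.comp_apply]
      constructor
      · rintro (h | ⟨x, hx, hx2⟩)
        · omega
        · have : x = q - 1 := by omega
          subst this; exact hx
      · intro h; right; exact ⟨q - 1, h, by omega⟩)]
    rw [if_pos ⟨by simp [goodPar], by simp⟩]
  | true :: true :: r => by
    have ih := zeros_evenPhase r
    show zeros (true :: true :: evenPhase r) = stepped true (zeros (true :: true :: r))
    simp only [zeros, ih, stepped, List.map_cons, List.map_map]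
    rw [tail2 (zeros r) _ (by
      intro q hq
      simp only [List.mem_map, Function.comp_apply]
      constructor
      · rintro ⟨x, hx, hx2⟩
        have : x = q - 1 := by omega
        subst this; exact hx
      · intro h; exact ⟨q - 1, h, by omega⟩)]

theorem zeros_oddPhase : ∀ s : List Bool, zeros (oddPhase s) = stepped false (zeros s)
  | [] => rfl
  | false :: r => by
    have ih := zeros_evenPhase r
    show zeros (false :: evenPhase r) = stepped false (zeros (false :: r))
    simp only [zeros, ih, stepped, List.map_cons, List.map_map]
    erw [tail1 (zeros r) _ (by
      intro q hq
      simp only [List.mem_cons, List.mem_map]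
      constructor
      · rintro (h | ⟨x, hx, hx2⟩)
        · omega
        · have : x = q - 1 := by omega
          subst this; exact hx
      · intro h; right; exact ⟨q - 1, h, by omega⟩)]
    erw [if_neg (by simp [goodPar])]
  | true :: r => by
    have ih := zeros_evenPhase r
    show zeros (true :: evenPhase r) = stepped false (zeros (true :: r))
    simp only [zeros, ih, stepped, List.map_cons, List.map_map]
    erw [tail1 (zeros r) _ (by
      intro q hq
      simp only [List.mem_map]
      constructor
      · rintro ⟨x, hx, hx2⟩
        have : x = q - 1 := by omega
        subst this; exact hx
      · intro h; exact ⟨q - 1, h, by omega⟩)]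

theorem zeros_applyPhases : ∀ (k : ℕ) (b : Bool) (s : List Bool),
    zeros (applyPhases k b s) = applyMoves k b (zeros s)
  | 0, _, _ => rfl
  | k + 1, b, s => by
    show zeros (applyPhases k (!b) _) = applyMoves k (!b) (stepped b (zeros s))
    cases b
    · rw [show (if false then evenPhase else oddPhase) s = oddPhase s from rfl,
        zeros_applyPhases k _ _, zeros_oddPhase]
    · rw [show (if true then evenPhase else oddPhase) s = evenPhase s from rfl,
        zeros_applyPhases k _ _, zeros_evenPhase]

/-! ### The invariant of the particle dynamics -/

theorem stepped_pairwise (p : Bool) {Q : List ℕ} (h : Q.Pairwise (· < ·)) :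
    (stepped p Q).Pairwise (· < ·) := by
  unfold stepped
  rw [List.pairwise_map]
  refine (List.Pairwise.and_mem.mp h).imp_of_mem ?_
  intro a c ha hc hab
  obtain ⟨haQ, hcQ, hac⟩ := hab
  by_cases hc' : goodPar p c ∧ c - 1 ∉ Q
  · have hb1 : a ≠ c - 1 := fun h => hc'.2 (h ▸ haQ)
    have : 0 < c := by omega
    simp only [if_pos hc']
    split <;> omega
  · simp only [if_neg hc']
    split <;> omega

theorem applyMoves_pairwise : ∀ (k : ℕ) (b : Bool) {Q : List ℕ}, Q.Pairwise (· < ·) →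
    (applyMoves k b Q).Pairwise (· < ·)
  | 0, _, _, h => h
  | k + 1, b, _, h => applyMoves_pairwise k (!b) (stepped_pairwise b h)

theorem bt_succ (t : ℕ) (b : Bool) : bt (t + 1) b = !(bt t b) := by
  by_cases h : t % 2 = 0
  · have h2 : ¬((t + 1) % 2 = 0) := by omega
    simp [bt, h, h2]
  · have h2 : (t + 1) % 2 = 0 := by omega
    simp [bt, h, h2]

theorem applyMoves_succ' : ∀ (t : ℕ) (b : Bool) (Q : List ℕ),
    applyMoves (t + 1) b Q = stepped (bt t b) (applyMoves t b Q)
  | 0, b, Q => by simp [applyMoves, bt]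
  | t + 1, b, Q => by
    show applyMoves (t + 1) (!b) (stepped b Q) = _
    rw [applyMoves_succ' t (!b) (stepped b Q), bt_succ]
    congr 1
    by_cases h : t % 2 = 0
    · have h2 : ¬((t + 1) % 2 = 0) := by omega
      simp [bt, h, h2]
    · have h2 : (t + 1) % 2 = 0 := by omega
      simp [bt, h, h2]

theorem goodPar_not_pred {p : Bool} {q : ℕ} (h : goodPar p q) : ¬goodPar p (q - 1) := by
  cases p <;> simp [goodPar] at h ⊢ <;> omega

theorem goodPar_not_flip {p : Bool} {q : ℕ} (h : goodPar p q) : ¬goodPar (!p) q := by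
  cases p <;> simp [goodPar] at h ⊢ <;> omega

theorem goodPar_pred_flip {p : Bool} {q : ℕ} (h : goodPar p q) (h2 : 2 ≤ q) :
    goodPar (!p) (q - 1) := by
  cases p <;> simp [goodPar] at h ⊢ <;> omega

theorem goodPar_flip_of_not {p : Bool} {q : ℕ} (h : ¬goodPar p q) (h0 : 0 < q) :
    goodPar (!p) q := by
  cases p <;> simp [goodPar] at h ⊢ <;> omega

theorem pairwise_mem_idx {S : List ℕ} (hS : S.Pairwise (· < ·)) {j q : ℕ}
    (hj : j < S.length) (hq : S[j] = q) (hm : q - 1 ∈ S) (h0 : 0 < q) :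
    0 < j ∧ ∃ hj' : j - 1 < S.length, S[j - 1] = q - 1 := by
  obtain ⟨i, hi, hiq⟩ := List.mem_iff_getElem.mp hm
  have hmono := List.pairwise_iff_getElem.mp hS
  have hij : i < j := by
    rcases lt_trichotomy i j with h | h | h
    · exact h
    · exfalso; subst h; omega
    · exfalso; have := hmono j i hj hi h; omega
  refine ⟨by omega, by omega, ?_⟩
  rcases Nat.lt_or_ge i (j - 1) with h | h
  · exfalso
    have h1 := hmono i (j - 1) hi (by omega) h
    have h2 := hmono (j - 1) j (by omega) hj (by omega)
    omega
  · have : i = j - 1 := by omega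
    subst this; exact hiq

/-- The key invariant: particle `j` (0-indexed) is at position at most
`max j (Q[j] + j + 1 - t - badBit)` after `t` phases. -/
theorem moves_inv (Q : List ℕ) (hQ : Q.Pairwise (· < ·)) (b : Bool) :
    ∀ (t : ℕ) (j : ℕ) (hj : j < Q.length)
      (hj' : j < (applyMoves t b Q).length),
      (applyMoves t b Q)[j] ≤ j ∨
        (applyMoves t b Q)[j] + t + badBit (bt t b) ((applyMoves t b Q)[j]) ≤
          Q[j] + j + 1 := by
  intro t
  induction t with
  | zero =>
    intro j hj hj'
    right
    have : (applyMoves 0 b Q)[j] = Q[j] := rfl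
    rw [this]
    unfold badBit; split <;> simp [bt] <;> omega
  | succ t IH =>
    intro j hj hj'
    have hlenS : j < (applyMoves t b Q).length := by rw [applyMoves_length]; exact hj
    set S := applyMoves t b Q with hS
    set p := bt t b with hp
    have hstep : (applyMoves (t + 1) b Q) = stepped p S := applyMoves_succ' t b Q
    have hget : (applyMoves (t + 1) b Q)[j]'hj' =
        (if goodPar p S[j] ∧ S[j] - 1 ∉ S then S[j] - 1 else S[j]) := by
      simp only [hstep, stepped, List.getElem_map]
    set q := S[j] with hq
    have hSp : S.Pairwise (· < ·) := applyMoves_pairwise t b hQ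
    rw [hget, bt_succ]
    rcases IH j hj hlenS with hle | hbd
    · left; split <;> omega
    · by_cases hqj : q ≤ j
      · left; split <;> omega
      · by_cases hgood : goodPar p q
        · by_cases hblock : q - 1 ∈ S
          · -- blocked: value stays q, becomes bad; use particle j-1
            right
            rw [if_neg (by simp [hblock])]
            obtain ⟨hjpos, hj1len, hSj1⟩ :=
              pairwise_mem_idx hSp hlenS rfl hblock (by omega)
            rcases IH (j - 1) (by omega) (by omega) with h1 | h1
            · exfalso; rw [hSj1] at h1; omega
            · rw [hSj1] at h1
              have hb1 : badBit p (q - 1) = 1 := by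
                unfold badBit; rw [if_neg (goodPar_not_pred hgood)]
              rw [hb1] at h1
              have hQmono : Q[j - 1]'(by omega) < Q[j] :=
                List.pairwise_iff_getElem.mp hQ (j - 1) j (by omega) hj (by omega)
              have hb2 : badBit (!p) q = 1 := by
                unfold badBit; rw [if_neg (goodPar_not_flip hgood)]
              rw [hb2]
              omega
          · -- moves
            rw [if_pos ⟨hgood, hblock⟩]
            by_cases hq1 : q - 1 ≤ j
            · left; exact hq1
            · right
              have hb0 : badBit p q = 0 := by unfold badBit; rw [if_pos hgood]
              rw [hb0] at hbd
              have hq2 : 2 ≤ q := by omega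
              have hb2 : badBit (!p) (q - 1) = 0 := by
                unfold badBit; rw [if_pos (goodPar_pred_flip hgood hq2)]
              rw [hb2]
              omega
        · -- parity-stuck: stays, becomes good
          right
          rw [if_neg (by tauto)]
          have hb1 : badBit p q = 1 := by unfold badBit; rw [if_neg hgood]
          rw [hb1] at hbd
          have hb2 : badBit (!p) q = 0 := by
            unfold badBit; rw [if_pos (goodPar_flip_of_not hgood (by omega))]
          rw [hb2]
          omega

/-! ### Extraction: sortedness of Bool lists -/

theorem all_true_of_zeros_nil : ∀ s : List Bool, zeros s = [] → ∀ x ∈ s, x = true := by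
  intro s
  induction s with
  | nil => simp
  | cons a r ih =>
    cases a
    · simp [zeros]
    · simp only [zeros, List.map_eq_nil_iff]
      intro h x hx
      rcases List.mem_cons.mp hx with rfl | hx
      · rfl
      · exact ih h x hx

theorem ge_of_pairwise {Q : List ℕ} (h : Q.Pairwise (· < ·)) :
    ∀ j (hj : j < Q.length), j ≤ Q[j] := by
  intro j
  induction j with
  | zero => intro _; omega
  | succ j ih =>
    intro hj
    have h1 := ih (by omega)
    have h2 := List.pairwise_iff_getElem.mp h j (j + 1) (by omega) hj (by omega)
    omega

theorem sorted_of_zeros_range : ∀ s : List Bool,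
    zeros s = List.range (zeros s).length → s.Pairwise (· ≤ ·) := by
  intro s
  induction s with
  | nil => simp
  | cons a r ih =>
    cases a
    · simp only [zeros, List.length_cons, List.length_map]
      rw [List.range_succ_eq_map, show Nat.succ = (· + 1) from rfl]
      intro h
      have h3 : zeros r = List.range (zeros r).length :=
        List.map_injective_iff.mpr (fun a b => by omega)
          ((List.cons.injEq _ _ _ _).mp h).2
      rw [List.pairwise_cons]
      exact ⟨fun x _ => Bool.false_le x, ih h3⟩
    · simp only [zeros, List.length_map]
      intro h
      cases hz : zeros r with
      | nil =>
        have hall := all_true_of_zeros_nil r hz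
        apply List.pairwise_iff_getElem.mpr
        intro i j hi hj hij
        have h1 : (true :: r)[i] ≤ true := by
          cases i with
          | zero => simp
          | succ i =>
            simp only [List.getElem_cons_succ]
            rw [hall _ (List.getElem_mem _)]
        have h2 : (true :: r)[j] = true := by
          cases j with
          | zero => omega
          | succ j =>
            simp only [List.getElem_cons_succ]
            exact hall _ (List.getElem_mem _)
        rw [h2]; exact h1
      | cons x zt =>
        exfalso
        rw [hz] at h
        simp only [List.map_cons, List.length_cons] at h
        rw [List.range_succ_eq_map] at h
        have := (List.cons.injEq _ _ _ _).mp h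
        omega

/-- The core: odd-even transposition sort sorts Bool lists in `n` phases. -/
theorem bool_core (s : List Bool) (b : Bool) :
    (applyPhases s.length b s).Pairwise (· ≤ ·) := by
  apply sorted_of_zeros_range
  rw [zeros_applyPhases]
  set Q := zeros s with hQdef
  have hQ : Q.Pairwise (· < ·) := zeros_pairwise s
  have hlen : (applyMoves s.length b Q).length = Q.length := applyMoves_length _ _ _
  have hZp : (applyMoves s.length b Q).Pairwise (· < ·) := applyMoves_pairwise _ _ hQ
  apply List.ext_getElem (by rw [List.length_range])
  intro j h1 h2
  rw [List.getElem_range]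
  have hQlen : j < Q.length := by omega
  have hup : (applyMoves s.length b Q)[j]'h1 ≤ j := by
    rcases moves_inv Q hQ b s.length j hQlen h1 with h | h
    · exact h
    · have hQj : Q[j]'hQlen < s.length :=
        zeros_lt s _ (List.getElem_mem _)
      have hbb : 0 ≤ badBit (bt s.length b) ((applyMoves s.length b Q)[j]'h1) :=
        Nat.zero_le _
      omega
  have hlow : j ≤ (applyMoves s.length b Q)[j]'h1 := ge_of_pairwise hZp j h1
  omega

/-! ### Main theorem -/

/-- Correctness of parallel (odd-even transposition) bubble sort in `n` rounds:
for any list of length `n`, after `n` alternating phases (starting with either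
parity) the result is a permutation of the input sorted in nondecreasing order. -/
theorem odd_even_transposition_sort_correct (b : Bool) (l : List α) :
    (applyPhases l.length b l).Perm l ∧
      (applyPhases l.length b l).Pairwise (· ≤ ·) := by
  refine ⟨applyPhases_perm _ _ _, ?_⟩
  rw [← List.isChain_iff_pairwise, List.isChain_iff_getElem]
  intro i hi
  by_contra hcon
  push_neg at hcon
  set out := applyPhases l.length b l with hout
  have hlt : out[i + 1]'(by omega) < out[i]'(by omega) := hcon
  set y := out[i + 1]'(by omega) with hy
  set f : α → Bool := fun z => decide (y < z) with hf
  have hmono : Monotone f := by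
    intro u v huv
    simp only [hf]
    by_cases h : y < u
    · have h2 : y < v := lt_of_lt_of_le h huv
      simp [h, h2]
    · simp [h]
  have hcomm : applyPhases l.length b (l.map f) = out.map f := by
    rw [← map_applyPhases hmono]
  have hsort := bool_core (l.map f) b
  rw [List.length_map, hcomm] at hsort
  have hol : out.length = l.length := (applyPhases_perm _ _ _).length_eq
  have hpair := List.pairwise_iff_getElem.mp hsort i (i + 1)
    (by rw [List.length_map]; omega) (by rw [List.length_map]; omega) (by omega)
  rw [List.getElem_map, List.getElem_map] at hpair
  have h1 : f (out[i]'(by omega)) = true := by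
    simp only [hf]; exact decide_eq_true hlt
  have h2 : f (out[i + 1]'(by omega)) = false := by
    simp only [hf, ← hy]; exact decide_eq_false (lt_irrefl y)
  rw [h1, h2] at hpair
  exact absurd hpair (by simp)
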